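/- Let G be a graph containing neither C₄, C₅, C₆ nor C₇ as subgraphs, let v be a vertex, and for each neighbor y of v let M_2(y) = N_2(y) ∩ N_3(v). Suppose y₁ ≠ y₂ are neighbors of v, a₁ ∈ M_2(y₁), and a₂ ∈ M_2(y₂). Then a₁ and a₂ are not adjacent. Consequently, if for each y in a set D ⊆ N_1(v) an independent set S_y ⊆ M_2(y) is chosen, then ⋃_{y∈D} S_y is independent. -/

import Mathlib

open SimpleGraph Set

variable {V : Type*} [Fintype V] [DecidableEq V]

/-- `N_i(S)`: vertices whose minimum distance to the set `S` equals `i`. -/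
def NSet (G : SimpleGraph V) (i : ℕ) (S : Set V) : Set V :=
  {u | (⨅ s ∈ S, G.edist s u) = (i : ℕ∞)}

/-- `N_i(x)`: vertices at distance exactly `i` from `x`. -/
def Nv (G : SimpleGraph V) (i : ℕ) (x : V) : Set V := {u | G.edist x u = (i : ℕ∞)}

/-- `S` is an independent set of `G`. -/
def IsIndep (G : SimpleGraph V) (S : Set V) : Prop :=
  S.Pairwise fun u v => ¬ G.Adj u v

/-- `A` dominates `T`. -/
def Dominates (G : SimpleGraph V) (A T : Set V) : Prop :=
  T ⊆ A ∪ {u | ∃ a ∈ A, G.Adj a u}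

/-- `S` is a maximal independent set of `G`. -/
def IsMaxIndep (G : SimpleGraph V) (S : Set V) : Prop :=
  IsIndep G S ∧ ∀ T, IsIndep G T → S ⊆ T → T = S

/-- The induced subgraph on `X ∪ Y` is complete bipartite with parts `X`, `Y`. -/
def IsCompBipartite (G : SimpleGraph V) (X Y : Set V) : Prop :=
  X.Nonempty ∧ Y.Nonempty ∧ Disjoint X Y ∧ IsIndep G X ∧ IsIndep G Y ∧
    ∀ x ∈ X, ∀ y ∈ Y, G.Adj x y

/-- `B = (X, Y)` is a generating subgraph of `G`. -/
def Generating (G : SimpleGraph V) (X Y : Set V) : Prop :=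
  IsCompBipartite G X Y ∧ ∃ S : Set V, IsIndep G S ∧ Disjoint S (X ∪ Y) ∧
    IsMaxIndep G (S ∪ X) ∧ IsMaxIndep G (S ∪ Y)

/-- `G` contains a (not necessarily induced) cycle on `k` vertices. -/
def HasCycle (G : SimpleGraph V) (k : ℕ) : Prop :=
  ∃ f : ZMod k → V, Function.Injective f ∧ ∀ i, G.Adj (f i) (f (i + 1))

/-- Weight of a set of vertices. -/
noncomputable def wt (w : V → ℝ) (S : Set V) : ℝ := ∑ x ∈ S.toFinite.toFinset, w x

/-- `G` is `w`-well-covered. -/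
def WWellCovered (G : SimpleGraph V) (w : V → ℝ) : Prop :=
  ∀ S T : Set V, IsMaxIndep G S → IsMaxIndep G T → wt w S = wt w T


section Aux

variable {V' : Type*} {G : SimpleGraph V'}

private lemma aux_hasCycle_four {a b c d : V'}
    (hab : G.Adj a b) (hbc : G.Adj b c) (hcd : G.Adj c d) (hda : G.Adj d a)
    (hac : a ≠ c) (hbd : b ≠ d) : HasCycle G 4 := by
  have h1 := hab.ne; have h2 := hbc.ne; have h3 := hcd.ne; have h4 := hda.ne
  refine ⟨(![a,b,c,d] : Fin 4 → V'), ?_, ?_⟩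
  · intro i j h
    fin_cases i <;> fin_cases j <;> simp_all <;> rfl
  · intro i
    fin_cases i <;>
      first
      | exact hab | exact hbc | exact hcd | exact hda

private lemma aux_hasCycle_seven {a b c d e x y : V'}
    (h1 : G.Adj a b) (h2 : G.Adj b c) (h3 : G.Adj c d) (h4 : G.Adj d e)
    (h5 : G.Adj e x) (h6 : G.Adj x y) (h7 : G.Adj y a)
    (hac : a ≠ c) (had : a ≠ d) (hae : a ≠ e) (hax : a ≠ x)
    (hbd : b ≠ d) (hbe : b ≠ e) (hbx : b ≠ x) (hby : b ≠ y)
    (hce : c ≠ e) (hcx : c ≠ x) (hcy : c ≠ y)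
    (hdx : d ≠ x) (hdy : d ≠ y) (hey : e ≠ y) : HasCycle G 7 := by
  have n1 := h1.ne; have n2 := h2.ne; have n3 := h3.ne; have n4 := h4.ne
  have n5 := h5.ne; have n6 := h6.ne; have n7 := h7.ne
  refine ⟨(![a,b,c,d,e,x,y] : Fin 7 → V'), ?_, ?_⟩
  · show Function.Injective (![a,b,c,d,e,x,y] : Fin 7 → V')
    rw [← List.nodup_ofFn]
    simp [List.ofFn_succ]
    refine ⟨?_,?_,?_,?_,?_,?_⟩ <;> tauto
  · intro i
    fin_cases i <;>
      first
      | exact h1 | exact h2 | exact h3 | exact h4 | exact h5 | exact h6 | exact h7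

private lemma aux_exists_mid {y a : V'} (h : G.edist y a = 2) :
    ∃ b, G.Adj y b ∧ G.Adj b a := by
  obtain ⟨p, hp⟩ := SimpleGraph.exists_walk_of_edist_eq_coe h
  match p, hp with
  | .cons h1 (.cons h2 .nil), _ => exact ⟨_, h1, h2⟩

private lemma aux_edist_le_of_adj {u v w : V'} {k : ℕ∞} (h : G.edist u v ≤ k)
    (ha : G.Adj v w) : G.edist u w ≤ k + 1 := by
  calc G.edist u w ≤ G.edist u v + G.edist v w := SimpleGraph.edist_triangle
    _ ≤ k + 1 := by
        rw [SimpleGraph.edist_eq_one_iff_adj.mpr ha]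
        exact add_le_add_left h 1

private lemma aux_ne_of_edists {v p q : V'} (hp : G.edist v p = 3)
    (hq : G.edist v q ≤ 2) : p ≠ q := by
  rintro rfl; rw [hp] at hq; exact absurd hq (by decide)

end Aux

theorem M2_union_indep (G : SimpleGraph V) (h4 : ¬ HasCycle G 4)
    (h5 : ¬ HasCycle G 5) (h6 : ¬ HasCycle G 6) (h7 : ¬ HasCycle G 7) (v : V) :
    (∀ y₁ y₂ a₁ a₂ : V, G.Adj v y₁ → G.Adj v y₂ → y₁ ≠ y₂ →
        a₁ ∈ Nv G 2 y₁ ∩ Nv G 3 v → a₂ ∈ Nv G 2 y₂ ∩ Nv G 3 v → ¬ G.Adj a₁ a₂) ∧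
    ∀ (D : Set V) (Sf : V → Set V), D ⊆ {y : V | G.Adj v y} →
      (∀ y ∈ D, Sf y ⊆ Nv G 2 y ∩ Nv G 3 v ∧ IsIndep G (Sf y)) →
      IsIndep G (⋃ y ∈ D, Sf y) := by
  have key : ∀ y₁ y₂ a₁ a₂ : V, G.Adj v y₁ → G.Adj v y₂ → y₁ ≠ y₂ →
      a₁ ∈ Nv G 2 y₁ ∩ Nv G 3 v → a₂ ∈ Nv G 2 y₂ ∩ Nv G 3 v → ¬ G.Adj a₁ a₂ := by
    intro y₁ y₂ a₁ a₂ hy₁ hy₂ hyy ha₁ ha₂ hadj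
    obtain ⟨ha₁y, ha₁v⟩ := ha₁
    obtain ⟨ha₂y, ha₂v⟩ := ha₂
    simp only [Nv, Set.mem_setOf_eq, Nat.cast_ofNat] at ha₁y ha₁v ha₂y ha₂v
    obtain ⟨b₁, hyb₁, hba₁⟩ := aux_exists_mid ha₁y
    obtain ⟨b₂, hyb₂, hba₂⟩ := aux_exists_mid ha₂y
    have hvy₁ : G.edist v y₁ ≤ 1 := le_of_eq (SimpleGraph.edist_eq_one_iff_adj.mpr hy₁)
    have hvy₂ : G.edist v y₂ ≤ 1 := le_of_eq (SimpleGraph.edist_eq_one_iff_adj.mpr hy₂)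
    have hvb₁ : G.edist v b₁ ≤ 2 := by
      have := aux_edist_le_of_adj hvy₁ hyb₁
      exact this.trans (by norm_num)
    have hvb₂ : G.edist v b₂ ≤ 2 := by
      have := aux_edist_le_of_adj hvy₂ hyb₂
      exact this.trans (by norm_num)
    have hvy₁' : G.edist v y₁ ≤ 2 := hvy₁.trans (by norm_num)
    have hvy₂' : G.edist v y₂ ≤ 2 := hvy₂.trans (by norm_num)
    have hvv : G.edist v v ≤ 2 := by simp
    have ha₁ne : ∀ q : V, G.edist v q ≤ 2 → q ≠ a₁ :=
      fun q hq => (aux_ne_of_edists ha₁v hq).symm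
    have ha₂ne : ∀ q : V, G.edist v q ≤ 2 → q ≠ a₂ :=
      fun q hq => (aux_ne_of_edists ha₂v hq).symm
    have hb₁v : b₁ ≠ v := by
      rintro rfl
      rw [SimpleGraph.edist_eq_one_iff_adj.mpr hba₁] at ha₁v
      exact absurd ha₁v (by decide)
    have hb₂v : b₂ ≠ v := by
      rintro rfl
      rw [SimpleGraph.edist_eq_one_iff_adj.mpr hba₂] at ha₂v
      exact absurd ha₂v (by decide)
    have hb₁y₂ : b₁ ≠ y₂ := by
      rintro rfl
      have : G.edist v a₁ ≤ 2 :=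
        (aux_edist_le_of_adj hvy₂ hba₁).trans (by norm_num)
      exact aux_ne_of_edists ha₁v this rfl
    have hb₂y₁ : b₂ ≠ y₁ := by
      rintro rfl
      have : G.edist v a₂ ≤ 2 :=
        (aux_edist_le_of_adj hvy₁ hba₂).trans (by norm_num)
      exact aux_ne_of_edists ha₂v this rfl
    by_cases hbb : b₁ = b₂
    · subst hbb
      exact h4 (aux_hasCycle_four hy₁ hyb₁ hyb₂.symm hy₂.symm hb₁v.symm hyy)
    · exact h7 (aux_hasCycle_seven hy₁ hyb₁ hba₁ hadj hba₂.symm hyb₂.symm hy₂.symm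
        hb₁v.symm (ha₁ne v hvv) (ha₂ne v hvv) hb₂v.symm
        (ha₁ne y₁ hvy₁') (ha₂ne y₁ hvy₁') hb₂y₁.symm hyy
        (ha₂ne b₁ hvb₁) hbb hb₁y₂
        (ha₁ne b₂ hvb₂).symm (ha₁ne y₂ hvy₂').symm (ha₂ne y₂ hvy₂').symm)
  refine ⟨key, ?_⟩
  intro D Sf hD hS
  intro u hu w hw hne
  simp only [Set.mem_iUnion] at hu hw
  obtain ⟨y, hyD, hu⟩ := hu
  obtain ⟨z, hzD, hw⟩ := hw
  by_cases hyz : y = z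
  · subst hyz
    exact (hS y hyD).2 hu hw hne
  · exact key y z u w (hD hyD) (hD hzD) hyz ((hS y hyD).1 hu) ((hS z hzD).1 hw)
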